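/- arXiv:2209.09419 — 8 statements merged into one kernel-verified Lean document; each statement's English description precedes it below -/
import Mathlib

section
/- For any sequence of real numbers z_1, z_2, ..., z_n satisfying 0 ≤ z_k ≤ Z_{k-1} := max{1, z_1 + ... + z_{k-1}} for all k, the sum ∑_{k=1}^n z_k / √(Z_{k-1}) is at most (√2 + 1)·√(Z_n). -/
lemma aux_sum_div_sqrt (z Z : ℕ → ℝ)
    (hZ : ∀ k, Z k = max 1 (∑ i ∈ Finset.range k, z i)) :
    ∀ n, (∀ k < n, 0 ≤ z k ∧ z k ≤ Z k) →
    ∑ k ∈ Finset.range n, z k / Real.sqrt (Z k) ≤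
      (Real.sqrt 2 + 1) * Real.sqrt (Z n)
        - (Z n + 1 - ∑ i ∈ Finset.range n, z i) / Real.sqrt (Z n) := by
  have he2 : Real.sqrt 2 ^ 2 = 2 := Real.sq_sqrt (by norm_num)
  have he0 : 0 ≤ Real.sqrt 2 := Real.sqrt_nonneg 2
  have he1 : 1 ≤ Real.sqrt 2 := by nlinarith
  intro n
  induction n with
  | zero =>
      intro _
      simp [hZ 0]
  | succ n ih =>
      intro h
      have hzn := h n (by omega)
      have ih' := ih (fun k hk => h k (by omega))
      have hs0 : (0:ℝ) ≤ ∑ i ∈ Finset.range n, z i :=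
        Finset.sum_nonneg (fun i hi => (h i (by
          have := Finset.mem_range.mp hi; omega)).1)
      set s := ∑ i ∈ Finset.range n, z i with hsdef
      have hZn : Z n = max 1 s := hZ n
      have hZn1 : Z (n+1) = max 1 (s + z n) := by
        rw [hZ (n+1), Finset.sum_range_succ]
      rw [Finset.sum_range_succ]
      have hSsucc : ∑ i ∈ Finset.range (n+1), z i = s + z n := by
        rw [Finset.sum_range_succ]
      rw [hSsucc]
      have key : z n / Real.sqrt (Z n)
          + ((Real.sqrt 2 + 1) * Real.sqrt (Z n) - (Z n + 1 - s) / Real.sqrt (Z n))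
          ≤ (Real.sqrt 2 + 1) * Real.sqrt (Z (n+1))
            - (Z (n+1) + 1 - (s + z n)) / Real.sqrt (Z (n+1)) := by
        rcases le_or_gt 1 s with h1s | h1s
        · -- Case A1 : s ≥ 1
          have hZnE : Z n = s := by rw [hZn, max_eq_right h1s]
          have hZn1E : Z (n+1) = s + z n := by
            rw [hZn1, max_eq_right (by linarith [hzn.1])]
          rw [hZnE, hZn1E]
          set a := Real.sqrt s with ha
          set b := Real.sqrt (s + z n) with hb
          have ha2 : a ^ 2 = s := Real.sq_sqrt (by linarith)
          have hb2 : b ^ 2 = s + z n := Real.sq_sqrt (by linarith [hzn.1])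
          have ha1 : 1 ≤ a := by
            rw [show (1:ℝ) = Real.sqrt 1 by simp]
            exact Real.sqrt_le_sqrt h1s
          have hab : a ≤ b := Real.sqrt_le_sqrt (by linarith [hzn.1])
          have hble : b ≤ Real.sqrt 2 * a := by
            have h2s : s + z n ≤ 2 * s := by
              have := hzn.2; rw [hZnE] at this; linarith
            calc b ≤ Real.sqrt (2 * s) := Real.sqrt_le_sqrt h2s
              _ = Real.sqrt 2 * a := Real.sqrt_mul (by norm_num) s
          have hapos : (0:ℝ) < a := by linarith
          have hbpos : (0:ℝ) < b := by linarith
          have e1 : s + 1 - s = 1 := by ring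
          have e2 : s + z n + 1 - (s + z n) = 1 := by ring
          rw [e1, e2]
          have h1 : z n / a ≤ (Real.sqrt 2 + 1) * (b - a) := by
            rw [div_le_iff₀ hapos]
            nlinarith [mul_nonneg (sub_nonneg.2 hab) (sub_nonneg.2 hble)]
          have h2 : 1 / b ≤ 1 / a := one_div_le_one_div_of_le hapos hab
          nlinarith [h1, h2]
        · rcases le_or_gt 1 (s + z n) with h1s' | h1s'
          · -- Case A2 : s < 1 ≤ s + z n
            have hZnE : Z n = 1 := by rw [hZn, max_eq_left h1s.le]
            have hZn1E : Z (n+1) = s + z n := by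
              rw [hZn1, max_eq_right h1s']
            set t := Real.sqrt (s + z n) with ht
            have ht2 : t ^ 2 = s + z n := Real.sq_sqrt (by linarith)
            have ht1 : 1 ≤ t := by
              rw [show (1:ℝ) = Real.sqrt 1 by simp]
              exact Real.sqrt_le_sqrt h1s'
            have hzn1 : z n ≤ 1 := by
              have := hzn.2; rw [hZnE] at this; exact this
            have hte : t ≤ Real.sqrt 2 := Real.sqrt_le_sqrt (by linarith)
            have htpos : (0:ℝ) < t := by linarith
            rw [hZnE, hZn1E]
            have e2 : s + z n + 1 - (s + z n) = 1 := by ring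
            rw [e2]
            simp only [Real.sqrt_one, div_one, mul_one]
            have h4 : t * (1 / t) = 1 := mul_one_div_cancel (ne_of_gt htpos)
            have h5 : (0:ℝ) ≤ Real.sqrt 2 * t - t ^ 2 + 1 := by
              nlinarith [mul_le_mul_of_nonneg_left hte htpos.le]
            nlinarith [mul_nonneg (sub_nonneg.2 ht1) h5, h4, htpos, ht2,
              div_nonneg zero_le_one htpos.le]
          · -- Case B : s + z n < 1
            have hZnE : Z n = 1 := by rw [hZn, max_eq_left h1s.le]
            have hZn1E : Z (n+1) = 1 := by rw [hZn1, max_eq_left h1s'.le]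
            rw [hZnE, hZn1E]
            simp only [Real.sqrt_one, div_one, mul_one]
            linarith
      linarith

/-- For any sequence of reals `z 0, ..., z (n-1)` with
`0 ≤ z k ≤ Z k := max 1 (z 0 + ... + z (k-1))`, the sum
`∑ z k / √(Z k)` is at most `(√2 + 1) * √(Z n)`. -/
theorem sum_div_sqrt_le (n : ℕ) (z : ℕ → ℝ) (Z : ℕ → ℝ)
    (hZ : ∀ k, Z k = max 1 (∑ i ∈ Finset.range k, z i))
    (hz : ∀ k < n, 0 ≤ z k ∧ z k ≤ Z k) :
    ∑ k ∈ Finset.range n, z k / Real.sqrt (Z k) ≤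
      (Real.sqrt 2 + 1) * Real.sqrt (Z n) := by
  have h := aux_sum_div_sqrt z Z hZ n hz
  have hZpos : (1:ℝ) ≤ Z n := by rw [hZ n]; exact le_max_left _ _
  have hsle : (∑ i ∈ Finset.range n, z i) ≤ Z n := by
    rw [hZ n]; exact le_max_right _ _
  have hsq : (1:ℝ) ≤ Real.sqrt (Z n) := by
    rw [show (1:ℝ) = Real.sqrt 1 by simp]
    exact Real.sqrt_le_sqrt hZpos
  have : 0 ≤ (Z n + 1 - ∑ i ∈ Finset.range n, z i) / Real.sqrt (Z n) :=
    div_nonneg (by linarith) (by linarith)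
  linarith
end

section
/- If ∑_{i=1}^{n-1} z_i ≤ 1 for a sequence of reals with 0 ≤ z_k ≤ Z_{k-1} := max{1, ∑_{i<k} z_i}, then ∑_{k=1}^n z_k/√(Z_{k-1}) ≤ (√2+1)·√(Z_n). -/
/-- Base case of the inequality: if `∑_{i<n-1} z i ≤ 1` for a sequence with
`0 ≤ z k ≤ Z k := max 1 (∑_{i<k} z i)`, then
`∑_{k<n} z k / √(Z k) ≤ (√2 + 1) * √(Z n)`. -/
theorem sum_div_sqrt_le_base (n : ℕ) (z : ℕ → ℝ) (Z : ℕ → ℝ)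
    (hZ : ∀ k, Z k = max 1 (∑ i ∈ Finset.range k, z i))
    (hz : ∀ k < n, 0 ≤ z k ∧ z k ≤ Z k)
    (hbase : ∑ i ∈ Finset.range (n - 1), z i ≤ 1) :
    ∑ k ∈ Finset.range n, z k / Real.sqrt (Z k) ≤
      (Real.sqrt 2 + 1) * Real.sqrt (Z n) := by
  have h2 : (1:ℝ) ≤ Real.sqrt 2 := by
    rw [show (1:ℝ) = Real.sqrt 1 by simp]
    exact Real.sqrt_le_sqrt (by norm_num)
  have h1 : 1 ≤ Real.sqrt (Z n) := by
    rw [show (1:ℝ) = Real.sqrt 1 by simp, hZ n]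
    exact Real.sqrt_le_sqrt (le_max_left _ _)
  rcases Nat.eq_zero_or_pos n with rfl | hn
  · simp
    nlinarith
  · have hZ1 : ∀ k ≤ n - 1, Z k = 1 := by
      intro k hk
      rw [hZ k, max_eq_left]
      calc ∑ i ∈ Finset.range k, z i ≤ ∑ i ∈ Finset.range (n-1), z i := by
            apply Finset.sum_le_sum_of_subset_of_nonneg (Finset.range_subset_range.2 hk)
            intro i hi _
            exact (hz i (lt_of_lt_of_le (Finset.mem_range.1 hi) (Nat.sub_le n 1))).1
        _ ≤ 1 := hbase
    have hLHS : ∑ k ∈ Finset.range n, z k / Real.sqrt (Z k) ≤ 2 := by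
      have heq : ∀ k ∈ Finset.range n, z k / Real.sqrt (Z k) = z k := by
        intro k hk
        rw [hZ1 k (Nat.le_sub_one_of_lt (Finset.mem_range.1 hk)), Real.sqrt_one, div_one]
      rw [Finset.sum_congr rfl heq]
      have hn' : n = (n-1) + 1 := (Nat.succ_pred_eq_of_pos hn).symm
      rw [hn', Finset.sum_range_succ]
      have hz' : z (n-1) ≤ 1 := by
        have h := (hz (n-1) (by omega)).2
        rwa [hZ1 (n-1) le_rfl] at h
      linarith
    nlinarith
end

section
/- (Sufficient Planning Horizon) If T ≥ Dμ*/Δ, then for every starting node s_0 there exists an admissible path s_{0:T} of length T that achieves the optimal cumulative expected reward V(s_0, T) and whose terminal node satisfies μ_{s_T} = μ*. Moreover, if T > Dμ*/Δ, then every optimal path of length T from s_0 ends at a node with mean reward μ*. -/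
open Finset
open scoped ENNReal

/-- A path `p` is admissible up to time `T` if consecutive nodes are adjacent. -/
def Adm {S : Type*} (adj : S → S → Prop) (p : ℕ → S) (T : ℕ) : Prop :=
  ∀ t < T, adj (p t) (p (t + 1))

/-- Cumulative expected reward of the path `p 0, p 1, ..., p T`. -/
noncomputable def Vpath {S : Type*} (μ : S → ℝ) (p : ℕ → S) (T : ℕ) : ℝ :=
  ∑ t ∈ Finset.range (T + 1), μ (p t)

/-- Optimal `T`-step cumulative expected reward starting from node `s`. -/
noncomputable def Vopt {S : Type*} (adj : S → S → Prop) (μ : S → ℝ) (s : S) (T : ℕ) : ℝ :=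
  sSup {v | ∃ p : ℕ → S, p 0 = s ∧ Adm adj p T ∧ Vpath μ p T = v}

/-- Infinite-horizon undiscounted regret (total cost) of a stationary policy `π`
starting from node `s`, as a limit (`tsum` of the nonnegative costs). -/
noncomputable def Rinf {S : Type*} (μ : S → ℝ) (μstar : ℝ) (π : S → S) (s : S) : ℝ≥0∞ :=
  ∑' t : ℕ, ENNReal.ofReal (μstar - μ (π^[t] s))

/-- The sufficient planning horizon `T_G = ⌈D μ* / Δ⌉`. -/
noncomputable def TG (D : ℕ) (μstar Δ : ℝ) : ℕ :=
  Nat.ceil ((D : ℝ) * μstar / Δ)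

lemma adm_trunc {S : Type*} {adj : S → S → Prop} (hrefl : ∀ s, adj s s)
    {r : ℕ → S} {d : ℕ} (h : ∀ t < d, adj (r t) (r (t+1))) (T : ℕ) :
    Adm adj (fun t => r (min t d)) T := by
  intro t _
  rcases lt_or_ge t d with h1 | h1
  · have e1 : min t d = t := min_eq_left h1.le
    have e2 : min (t+1) d = t+1 := min_eq_left (Nat.succ_le_of_lt h1)
    simp only [e1, e2]
    exact h t h1
  · have e1 : min t d = d := min_eq_right h1
    have e2 : min (t+1) d = d := min_eq_right (le_trans h1 (Nat.le_succ t))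
    simp only [e1, e2]
    exact hrefl _

lemma vset_finite {S : Type*} [Fintype S] (adj : S → S → Prop) (μ : S → ℝ) (s : S) (T : ℕ) :
    {v | ∃ p : ℕ → S, p 0 = s ∧ Adm adj p T ∧ Vpath μ p T = v}.Finite := by
  apply Set.Finite.subset (Set.finite_range (fun g : Fin (T+1) → S => ∑ i, μ (g i)))
  rintro v ⟨p, -, -, rfl⟩
  exact ⟨fun i => p i, (Finset.sum_range fun t => μ (p t)).symm⟩

/-- Sufficient Planning Horizon: if `T ≥ D μ* / Δ` then from every start node
there is an optimal path of length `T` ending in a node of maximal mean reward;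
if moreover `T > D μ* / Δ` then every optimal path of length `T` ends in a node
of maximal mean reward. -/
theorem sufficient_planning_horizon {S : Type*} [Fintype S] [Nonempty S]
    (adj : S → S → Prop) (hrefl : ∀ s, adj s s) (hsymm : ∀ s t, adj s t → adj t s)
    (μ : S → ℝ) (hμ0 : ∀ s, 0 ≤ μ s)
    (μstar : ℝ) (hmax : ∀ s, μ s ≤ μstar) (hex : ∃ s, μ s = μstar)
    (Δ : ℝ) (hΔ : 0 < Δ) (hgap : ∀ s, μ s < μstar → μ s ≤ μstar - Δ)
    (D : ℕ)
    (hD : ∀ s s' : S, ∃ (T : ℕ) (p : ℕ → S),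
      T ≤ D ∧ p 0 = s ∧ p T = s' ∧ Adm adj p T)
    (T : ℕ) :
    (((D : ℝ) * μstar / Δ ≤ (T : ℝ)) →
      ∀ s0 : S, ∃ p : ℕ → S, p 0 = s0 ∧ Adm adj p T ∧
        Vpath μ p T = Vopt adj μ s0 T ∧ μ (p T) = μstar) ∧
    (((D : ℝ) * μstar / Δ < (T : ℝ)) →
      ∀ (s0 : S) (p : ℕ → S), p 0 = s0 → Adm adj p T →
        Vpath μ p T = Vopt adj μ s0 T → μ (p T) = μstar) := by
  classical
  obtain ⟨sstar, hsstar⟩ := hex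
  have hμstar0 : 0 ≤ μstar := hsstar ▸ hμ0 sstar
  have hub : ∀ (s : S) (p : ℕ → S), p 0 = s → Adm adj p T →
      Vpath μ p T ≤ Vopt adj μ s T :=
    fun s p h0 hA => le_csSup ((vset_finite adj μ s T).bddAbove) ⟨p, h0, hA, rfl⟩
  have hopt : ∀ s : S, ∃ p : ℕ → S, p 0 = s ∧ Adm adj p T ∧
      Vpath μ p T = Vopt adj μ s T := by
    intro s
    have hne : {v | ∃ p : ℕ → S, p 0 = s ∧ Adm adj p T ∧ Vpath μ p T = v}.Nonempty :=
      ⟨_, fun _ => s, rfl, fun t _ => hrefl s, rfl⟩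
    exact hne.csSup_mem (vset_finite adj μ s T)
  -- never-visit contradiction
  have key : ∀ (s0 : S) (p : ℕ → S), (D : ℝ) * μstar ≤ (T : ℝ) * Δ → p 0 = s0 →
      Adm adj p T → Vpath μ p T = Vopt adj μ s0 T →
      (∀ t ≤ T, μ (p t) ≠ μstar) → False := by
    intro s0 p hTΔ hp0 hpAdm hpV hnov
    have hp0lt : μ (p 0) < μstar := lt_of_le_of_ne (hmax _) (hnov 0 (Nat.zero_le _))
    have hΔμ : Δ ≤ μstar := by
      have := hgap (p 0) hp0lt
      linarith [hμ0 (p 0)]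
    have hμpos : 0 < μstar := lt_of_lt_of_le hΔ hΔμ
    have hDT : (D : ℝ) ≤ T := by
      nlinarith [mul_le_mul_of_nonneg_left hΔμ (Nat.cast_nonneg T : (0:ℝ) ≤ T)]
    have hDTn : D ≤ T := by exact_mod_cast hDT
    obtain ⟨d, r, hdD, hr0, hrd, hrAdm⟩ := hD s0 sstar
    have hdT : d ≤ T := le_trans hdD hDTn
    -- lower bound on Vopt via the reach-and-stay path
    have hq0 : (fun t => r (min t d)) 0 = s0 := by simp [hr0]
    have hqAdm : Adm adj (fun t => r (min t d)) T := adm_trunc hrefl hrAdm T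
    have hq_ge : ((T : ℝ) + 1 - d) * μstar ≤ Vpath μ (fun t => r (min t d)) T := by
      have hsub : Finset.Ico d (T+1) ⊆ Finset.range (T+1) := by
        intro x hx
        simp only [Finset.mem_Ico] at hx
        exact Finset.mem_range.2 hx.2
      have h1 : ∑ t ∈ Finset.Ico d (T+1), μ (r (min t d)) ≤
          Vpath μ (fun t => r (min t d)) T := by
        unfold Vpath
        exact Finset.sum_le_sum_of_subset_of_nonneg hsub (fun i _ _ => hμ0 _)
      have hconst : ∀ t ∈ Finset.Ico d (T+1), μ (r (min t d)) = μstar := fun t ht => by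
        rw [min_eq_right (Finset.mem_Ico.1 ht).1, hrd, hsstar]
      have h2 : ∑ t ∈ Finset.Ico d (T+1), μ (r (min t d)) = ((T : ℝ) + 1 - d) * μstar := by
        rw [Finset.sum_congr rfl hconst, Finset.sum_const, Nat.card_Ico, nsmul_eq_mul,
          Nat.cast_sub (by omega : d ≤ T + 1)]
        push_cast
        ring
      linarith
    have hVopt_ge : ((T : ℝ) + 1 - D) * μstar ≤ Vopt adj μ s0 T := by
      have := hub s0 (fun t => r (min t d)) hq0 hqAdm
      have hdD' : (d : ℝ) ≤ D := Nat.cast_le.2 hdD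
      nlinarith [mul_nonneg (sub_nonneg.2 hdD') hμstar0]
    -- upper bound on Vpath p
    have hp_le : Vpath μ p T ≤ ((T : ℝ) + 1) * (μstar - Δ) := by
      have : Vpath μ p T ≤ ∑ _t ∈ Finset.range (T+1), (μstar - Δ) := by
        apply Finset.sum_le_sum
        intro i hi
        exact hgap _ (lt_of_le_of_ne (hmax _)
          (hnov i (Nat.lt_succ_iff.1 (Finset.mem_range.1 hi))))
      simpa [Finset.sum_const, nsmul_eq_mul, mul_sub] using this
    nlinarith [hpV ▸ hVopt_ge]
  -- truncation improvement facts
  have trunc : ∀ (p : ℕ → S) (t₀ : ℕ), t₀ ≤ T → μ (p t₀) = μstar →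
      (∀ i ∈ Finset.range (T+1), μ (p i) ≤ μ (p (min i t₀))) ∧
      μ ((fun t => p (min t t₀)) T) = μstar := by
    intro p t₀ ht₀ hμt₀
    constructor
    · intro i _
      rcases le_or_gt i t₀ with h | h
      · rw [min_eq_left h]
      · rw [min_eq_right h.le, hμt₀]; exact hmax _
    · simp only [min_eq_right ht₀, hμt₀]
  constructor
  · -- existence part
    intro hT s0
    have hTΔ : (D : ℝ) * μstar ≤ (T : ℝ) * Δ := by
      rw [div_le_iff₀ hΔ] at hT; linarith
    obtain ⟨p, hp0, hpAdm, hpV⟩ := hopt s0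
    by_cases hvisit : ∃ t ≤ T, μ (p t) = μstar
    · obtain ⟨t₀, ht₀, hμt₀⟩ := hvisit
      obtain ⟨hle, hend⟩ := trunc p t₀ ht₀ hμt₀
      have hp'0 : (fun t => p (min t t₀)) 0 = s0 := by simp [hp0]
      have hp'Adm : Adm adj (fun t => p (min t t₀)) T :=
        adm_trunc hrefl (fun t ht => hpAdm t (lt_of_lt_of_le ht ht₀)) T
      refine ⟨fun t => p (min t t₀), hp'0, hp'Adm, le_antisymm (hub s0 (fun t => p (min t t₀)) hp'0 hp'Adm) ?_, hend⟩
      calc Vopt adj μ s0 T = Vpath μ p T := hpV.symm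
        _ ≤ Vpath μ (fun t => p (min t t₀)) T := Finset.sum_le_sum hle
    · push_neg at hvisit
      exact (key s0 p hTΔ hp0 hpAdm hpV hvisit).elim
  · -- uniqueness part
    intro hT s0 p hp0 hpAdm hpV
    by_contra hend
    have hendlt : μ (p T) < μstar := lt_of_le_of_ne (hmax _) hend
    have hTΔ : (D : ℝ) * μstar ≤ (T : ℝ) * Δ := by
      rw [div_lt_iff₀ hΔ] at hT; linarith
    by_cases hvisit : ∃ t ≤ T, μ (p t) = μstar
    · obtain ⟨t₀, ht₀, hμt₀⟩ := hvisit
      have ht₀T : t₀ < T := lt_of_le_of_ne ht₀ (fun h => hend (h ▸ hμt₀))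
      obtain ⟨hle, -⟩ := trunc p t₀ ht₀ hμt₀
      have hp'0 : (fun t => p (min t t₀)) 0 = s0 := by simp [hp0]
      have hp'Adm : Adm adj (fun t => p (min t t₀)) T :=
        adm_trunc hrefl (fun t ht => hpAdm t (lt_of_lt_of_le ht ht₀)) T
      have hstrict : Vpath μ p T < Vpath μ (fun t => p (min t t₀)) T := by
        apply Finset.sum_lt_sum hle
        refine ⟨T, Finset.mem_range.2 (Nat.lt_succ_self T), ?_⟩
        rw [min_eq_right ht₀]
        exact lt_of_lt_of_le hendlt (le_of_eq hμt₀.symm)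
      have := hub s0 (fun t => p (min t t₀)) hp'0 hp'Adm
      linarith [hpV ▸ lt_of_lt_of_le hstrict this]
    · push_neg at hvisit
      exact key s0 p hTΔ hp0 hpAdm hpV hvisit
end

section
/- (V increment) If T ≥ Dμ*/Δ, then for every node s, V(s, T+1) = V(s, T) + μ*. -/
open Finset
open scoped ENNReal

lemma valset_finite {S : Type*} [Fintype S] (adj : S → S → Prop) (μ : S → ℝ) (s : S) (T : ℕ) :
    ({v | ∃ p : ℕ → S, p 0 = s ∧ Adm adj p T ∧ Vpath μ p T = v}).Finite := by
  apply Set.Finite.subset (Set.finite_range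
    (fun q : Fin (T+1) → S => ∑ t ∈ Finset.range (T+1), μ (q ⟨t % (T+1), Nat.mod_lt _ (Nat.succ_pos _)⟩)))
  rintro v ⟨p, -, -, rfl⟩
  refine ⟨fun i => p i.val, ?_⟩
  unfold Vpath
  refine Finset.sum_congr rfl fun t ht => ?_
  simp only [Finset.mem_range] at ht
  show μ (p (t % (T+1))) = μ (p t)
  rw [Nat.mod_eq_of_lt ht]

lemma valset_nonempty {S : Type*} (adj : S → S → Prop) (hrefl : ∀ s, adj s s) (μ : S → ℝ)
    (s : S) (T : ℕ) :
    ({v | ∃ p : ℕ → S, p 0 = s ∧ Adm adj p T ∧ Vpath μ p T = v}).Nonempty :=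
  ⟨_, fun _ => s, rfl, fun _ _ => hrefl s, rfl⟩

lemma le_vopt {S : Type*} [Fintype S] (adj : S → S → Prop) (μ : S → ℝ) (s : S) (T : ℕ)
    (p : ℕ → S) (hp0 : p 0 = s) (hadm : Adm adj p T) : Vpath μ p T ≤ Vopt adj μ s T :=
  le_csSup (valset_finite adj μ s T).bddAbove ⟨p, hp0, hadm, rfl⟩

lemma vopt_attained {S : Type*} [Fintype S] (adj : S → S → Prop) (hrefl : ∀ s, adj s s)
    (μ : S → ℝ) (s : S) (T : ℕ) :
    ∃ p : ℕ → S, p 0 = s ∧ Adm adj p T ∧ Vpath μ p T = Vopt adj μ s T :=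
  (valset_nonempty adj hrefl μ s T).csSup_mem (valset_finite adj μ s T)

lemma insert_sum {S : Type*} (μ : S → ℝ) (p : ℕ → S) (T t0 : ℕ) (ht0 : t0 ≤ T) :
    Vpath μ (fun i => if i ≤ t0 then p i else p (i-1)) (T+1) = Vpath μ p T + μ (p t0) := by
  unfold Vpath
  have hsplit : ∀ (n : ℕ) (f : ℕ → ℝ), t0 + 1 ≤ n + 1 →
      ∑ i ∈ Finset.range (n+1), f i
        = ∑ i ∈ Finset.range (t0+1), f i + ∑ i ∈ Finset.Ico (t0+1) (n+1), f i := by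
    intro n f hn
    rw [Finset.range_eq_Ico, ← Finset.sum_Ico_consecutive _ (Nat.zero_le (t0+1)) hn]
    rw [Finset.range_eq_Ico]
  rw [hsplit (T+1) _ (by omega), hsplit T _ (by omega)]
  have h1 : ∑ i ∈ Finset.range (t0+1), μ (if i ≤ t0 then p i else p (i-1))
      = ∑ i ∈ Finset.range (t0+1), μ (p i) := by
    refine Finset.sum_congr rfl fun i hi => ?_
    simp only [Finset.mem_range] at hi
    rw [if_pos (by omega)]
  have h2 : ∑ i ∈ Finset.Ico (t0+1) (T+2), μ (if i ≤ t0 then p i else p (i-1))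
      = μ (p t0) + ∑ i ∈ Finset.Ico (t0+1) (T+1), μ (p i) := by
    have e1 : ∑ i ∈ Finset.Ico (t0+1) (T+2), μ (if i ≤ t0 then p i else p (i-1))
        = ∑ i ∈ Finset.range (T+1-t0), μ (p (t0+i)) := by
      rw [Finset.sum_Ico_eq_sum_range]
      have : T + 2 - (t0+1) = T + 1 - t0 := by omega
      rw [this]
      refine Finset.sum_congr rfl fun i _ => ?_
      rw [if_neg (by omega)]
      have h : t0+1+i-1 = t0+i := by omega
      rw [h]
    have e2 : ∑ i ∈ Finset.Ico t0 (T+1), μ (p i)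
        = ∑ i ∈ Finset.range (T+1-t0), μ (p (t0+i)) := by
      rw [Finset.sum_Ico_eq_sum_range]
    rw [e1, ← e2, Finset.sum_eq_sum_Ico_succ_bot (by omega : t0 < T+1)]
  rw [h1, h2]
  ring

lemma stay_bound {S : Type*} [Fintype S] (adj : S → S → Prop) (hrefl : ∀ s, adj s s)
    (μ : S → ℝ) (hμ0 : ∀ s, 0 ≤ μ s) (μstar : ℝ)
    (s sstar : S) (hs : μ sstar = μstar)
    (d : ℕ) (p : ℕ → S) (hp0 : p 0 = s) (hpd : p d = sstar) (hadm : Adm adj p d)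
    (n : ℕ) (hdn : d ≤ n) :
    ((n + 1 - d : ℕ) : ℝ) * μstar ≤ Vopt adj μ s n := by
  set q : ℕ → S := fun t => p (min t d) with hq
  have hq0 : q 0 = s := by simp [hq, hp0]
  have hqadm : Adm adj q n := by
    intro t _
    rcases le_or_gt (t + 1) d with h | h
    · have h1 : min t d = t := by omega
      have h2 : min (t+1) d = t + 1 := by omega
      simp only [hq, h1, h2]
      exact hadm t (by omega)
    · have h1 : min t d = d := by omega
      have h2 : min (t+1) d = d := by omega
      simp only [hq, h1, h2]
      exact hrefl _
  refine le_trans ?_ (le_vopt adj μ s n q hq0 hqadm)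
  unfold Vpath
  have hsub : Finset.Ico d (n+1) ⊆ Finset.range (n+1) := by
    intro x hx
    simp only [Finset.mem_Ico] at hx
    simp only [Finset.mem_range]
    omega
  have h1 : ∑ t ∈ Finset.Ico d (n+1), μ (q t) ≤ ∑ t ∈ Finset.range (n+1), μ (q t) :=
    Finset.sum_le_sum_of_subset_of_nonneg hsub (fun i _ _ => hμ0 _)
  refine le_trans ?_ h1
  have h2 : ∑ t ∈ Finset.Ico d (n+1), μ (q t) = ∑ t ∈ Finset.Ico d (n+1), μstar := by
    refine Finset.sum_congr rfl fun t ht => ?_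
    simp only [Finset.mem_Ico] at ht
    have : min t d = d := by omega
    simp only [hq, this, hpd, hs]
  rw [h2, Finset.sum_const, Nat.card_Ico, nsmul_eq_mul]

/-- V increment: if `T ≥ D μ* / Δ`, then `V(s, T+1) = V(s, T) + μ*` for every node. -/
theorem V_increment {S : Type*} [Fintype S] [Nonempty S]
    (adj : S → S → Prop) (hrefl : ∀ s, adj s s) (hsymm : ∀ s t, adj s t → adj t s)
    (μ : S → ℝ) (hμ0 : ∀ s, 0 ≤ μ s)
    (μstar : ℝ) (hmax : ∀ s, μ s ≤ μstar) (hex : ∃ s, μ s = μstar)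
    (Δ : ℝ) (hΔ : 0 < Δ) (hgap : ∀ s, μ s < μstar → μ s ≤ μstar - Δ)
    (D : ℕ)
    (hD : ∀ s s' : S, ∃ (T : ℕ) (p : ℕ → S),
      T ≤ D ∧ p 0 = s ∧ p T = s' ∧ Adm adj p T)
    (T : ℕ) (hT : (D : ℝ) * μstar / Δ ≤ (T : ℝ)) :
    ∀ s : S, Vopt adj μ s (T + 1) = Vopt adj μ s T + μstar := by
  intro s
  obtain ⟨sstar, hsstar⟩ := hex
  have hμs : 0 ≤ μstar := hsstar ▸ hμ0 sstar
  have hDT : (D : ℝ) * μstar ≤ (T : ℝ) * Δ := by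
    rw [div_le_iff₀ hΔ] at hT
    linarith
  -- upper bound
  have hub : Vopt adj μ s (T+1) ≤ Vopt adj μ s T + μstar := by
    refine csSup_le (valset_nonempty adj hrefl μ s (T+1)) ?_
    rintro v ⟨p, hp0, hadm, rfl⟩
    have : Vpath μ p (T+1) = Vpath μ p T + μ (p (T+1)) := by
      unfold Vpath
      rw [Finset.sum_range_succ]
    rw [this]
    have hadm' : Adm adj p T := fun t ht => hadm t (by omega)
    exact add_le_add (le_vopt adj μ s T p hp0 hadm') (hmax _)
  -- optimal path for horizon T
  obtain ⟨p, hp0, hadm, hpv⟩ := vopt_attained adj hrefl μ s T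
  -- the optimal path visits a μ*-node
  have hvisit : ∃ t0, t0 ≤ T ∧ μ (p t0) = μstar := by
    by_contra h
    push_neg at h
    have hlt : ∀ t ≤ T, μ (p t) ≤ μstar - Δ := fun t ht =>
      hgap _ (lt_of_le_of_ne (hmax _) (h t ht))
    have hΔμ : Δ ≤ μstar := by
      have := hlt 0 (Nat.zero_le _)
      have := hμ0 (p 0)
      linarith
    obtain ⟨d, pd, hdD, hpd0, hpdd, hadmd⟩ := hD s sstar
    have hdT : d ≤ T := by
      have hDr : (D : ℝ) ≤ (T : ℝ) := by
        rcases eq_or_lt_of_le hμs with h0 | h0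
        · nlinarith [Nat.cast_nonneg (α := ℝ) D, Nat.cast_nonneg (α := ℝ) T]
        · nlinarith
      have : (d : ℝ) ≤ (T : ℝ) := le_trans (by exact_mod_cast hdD) hDr
      exact_mod_cast this
    have hlow := stay_bound adj hrefl μ hμ0 μstar s sstar hsstar d pd hpd0 hpdd hadmd T hdT
    have hhigh : Vpath μ p T ≤ ((T : ℝ) + 1) * (μstar - Δ) := by
      unfold Vpath
      calc ∑ t ∈ Finset.range (T+1), μ (p t)
          ≤ ∑ t ∈ Finset.range (T+1), (μstar - Δ) := by
            refine Finset.sum_le_sum fun t ht => ?_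
            simp only [Finset.mem_range] at ht
            exact hlt t (by omega)
        _ = ((T : ℝ) + 1) * (μstar - Δ) := by
            rw [Finset.sum_const, Finset.card_range, nsmul_eq_mul]
            push_cast
            ring
    have hcast : ((T + 1 - d : ℕ) : ℝ) = (T : ℝ) + 1 - (d : ℝ) := by
      push_cast [Nat.cast_sub (by omega : d ≤ T + 1)]
      ring
    rw [hcast] at hlow
    have hdDr : (d : ℝ) ≤ (D : ℝ) := by exact_mod_cast hdD
    rw [hpv] at hhigh
    nlinarith
  obtain ⟨t0, ht0T, ht0⟩ := hvisit
  -- lower bound via insertion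
  have hlb : Vopt adj μ s T + μstar ≤ Vopt adj μ s (T+1) := by
    set q : ℕ → S := fun i => if i ≤ t0 then p i else p (i-1) with hq
    have hq0 : q 0 = s := by simp [hq, hp0]
    have hqadm : Adm adj q (T+1) := by
      intro t ht
      rcases lt_trichotomy t t0 with h | h | h
      · have h1 : (if t ≤ t0 then p t else p (t-1)) = p t := if_pos (by omega)
        have h2 : (if t+1 ≤ t0 then p (t+1) else p (t+1-1)) = p (t+1) := by
          exact if_pos (by omega)
        simp only [hq, h1, h2]
        exact hadm t (by omega)
      · have h1 : (if t ≤ t0 then p t else p (t-1)) = p t := if_pos (by omega)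
        have h2 : (if t+1 ≤ t0 then p (t+1) else p (t+1-1)) = p t := by
          rw [if_neg (by omega)]
          congr 1
        simp only [hq, h1, h2]
        exact hrefl _
      · have h1 : (if t ≤ t0 then p t else p (t-1)) = p (t-1) := if_neg (by omega)
        have h2 : (if t+1 ≤ t0 then p (t+1) else p (t+1-1)) = p t := by
          rw [if_neg (by omega)]
          congr 1
        simp only [hq, h1, h2]
        have : t - 1 + 1 = t := by omega
        rw [← this]
        exact hadm (t-1) (by omega)
    have hv : Vpath μ q (T+1) = Vpath μ p T + μ (p t0) := insert_sum μ p T t0 ht0T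
    calc Vopt adj μ s T + μstar = Vpath μ q (T+1) := by rw [hv, hpv, ht0]
      _ ≤ Vopt adj μ s (T+1) := le_vopt adj μ s (T+1) q hq0 hqadm
  linarith
end

section
/- (General V increment) If T ≥ Dμ*/Δ, then for every node s and every integer N ≥ 0, V(s, T+N) = V(s, T) + N·μ*. -/
open Finset
open scoped ENNReal

/-- General V increment: if `T ≥ D μ* / Δ`, then `V(s, T+N) = V(s, T) + N μ*`. -/
theorem V_increment_general {S : Type*} [Fintype S] [Nonempty S]
    (adj : S → S → Prop) (hrefl : ∀ s, adj s s) (hsymm : ∀ s t, adj s t → adj t s)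
    (μ : S → ℝ) (hμ0 : ∀ s, 0 ≤ μ s)
    (μstar : ℝ) (hmax : ∀ s, μ s ≤ μstar) (hex : ∃ s, μ s = μstar)
    (Δ : ℝ) (hΔ : 0 < Δ) (hgap : ∀ s, μ s < μstar → μ s ≤ μstar - Δ)
    (D : ℕ)
    (hD : ∀ s s' : S, ∃ (T : ℕ) (p : ℕ → S),
      T ≤ D ∧ p 0 = s ∧ p T = s' ∧ Adm adj p T)
    (T : ℕ) (hT : (D : ℝ) * μstar / Δ ≤ (T : ℝ)) :
    ∀ (s : S) (N : ℕ), Vopt adj μ s (T + N) = Vopt adj μ s T + (N : ℝ) * μstar := by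
  intro s N
  set A : ℕ → Set ℝ :=
    fun T' => {v | ∃ p : ℕ → S, p 0 = s ∧ Adm adj p T' ∧ Vpath μ p T' = v} with hA
  have hVopt : ∀ T', Vopt adj μ s T' = sSup (A T') := fun _ => rfl
  have hμstar0 : 0 ≤ μstar := le_trans (hμ0 (Classical.arbitrary S)) (hmax _)
  have hub : ∀ T' : ℕ, ∀ v ∈ A T', v ≤ ((T' : ℝ) + 1) * μstar := by
    rintro T' v ⟨p, hp0, hadm, rfl⟩
    calc Vpath μ p T' ≤ ∑ _t ∈ Finset.range (T' + 1), μstar :=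
          Finset.sum_le_sum (fun t _ => hmax _)
    _ = ((T' : ℝ) + 1) * μstar := by
          rw [Finset.sum_const, card_range, nsmul_eq_mul]; push_cast; ring
  have hbdd : ∀ T' : ℕ, BddAbove (A T') := fun T' => ⟨_, hub T'⟩
  have hne : ∀ T' : ℕ, (A T').Nonempty := fun T' =>
    ⟨Vpath μ (fun _ => s) T', fun _ => s, rfl, fun t _ => hrefl s, rfl⟩
  have hDμ : (D : ℝ) * μstar ≤ (T : ℝ) * Δ := by
    rw [div_le_iff₀ hΔ] at hT; linarith
  -- Key lower-bound step
  have key : ∀ v ∈ A T, v + (N : ℝ) * μstar ≤ Vopt adj μ s (T + N) := by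
    rintro v ⟨p, hp0, hadm, rfl⟩
    by_cases hvisit : ∃ t, t ≤ T ∧ μ (p t) = μstar
    · obtain ⟨t, htT, hopt⟩ := hvisit
      set q : ℕ → S := fun k => if k ≤ t then p k else p t with hq
      have hq0 : q 0 = s := by simp [hq, hp0]
      have hqadm : Adm adj q (T + N) := by
        intro k hk
        by_cases h1 : k + 1 ≤ t
        · simp only [hq]
          rw [if_pos (le_trans (Nat.le_succ k) h1), if_pos h1]
          exact hadm k (lt_of_lt_of_le (Nat.lt_of_succ_le h1) htT)
        · by_cases h2 : k ≤ t
          · have hkt : k = t := by omega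
            subst hkt
            simp only [hq, le_refl, if_pos, Nat.not_succ_le_self, if_neg, if_true]
            exact hrefl _
          · simp only [hq, if_neg h2, if_neg h1]; exact hrefl _
      have hqval : Vpath μ q (T + N) =
          (∑ k ∈ Finset.range (t + 1), μ (p k)) + ((T + N - t : ℕ) : ℝ) * μstar := by
        unfold Vpath
        rw [show T + N + 1 = (t + 1) + (T + N - t) by omega, Finset.sum_range_add]
        congr 1
        · exact Finset.sum_congr rfl (fun k hk => by
            rw [Finset.mem_range] at hk
            simp [hq, Nat.lt_succ_iff.mp hk])
        · have : ∀ i ∈ Finset.range (T + N - t), μ (q (t + 1 + i)) = μstar := by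
            intro i _
            have : ¬ (t + 1 + i ≤ t) := by omega
            simp [hq, this, hopt]
          rw [Finset.sum_congr rfl this, Finset.sum_const, card_range, nsmul_eq_mul]
      have hpval : Vpath μ p T ≤
          (∑ k ∈ Finset.range (t + 1), μ (p k)) + ((T - t : ℕ) : ℝ) * μstar := by
        unfold Vpath
        rw [show T + 1 = (t + 1) + (T - t) by omega, Finset.sum_range_add]
        have : ∑ i ∈ Finset.range (T - t), μ (p (t + 1 + i)) ≤ ((T - t : ℕ) : ℝ) * μstar := by
          calc _ ≤ ∑ _i ∈ Finset.range (T - t), μstar :=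
                Finset.sum_le_sum (fun i _ => hmax _)
          _ = ((T - t : ℕ) : ℝ) * μstar := by
                rw [Finset.sum_const, card_range, nsmul_eq_mul]
        linarith
      have hmem : Vpath μ q (T + N) ≤ Vopt adj μ s (T + N) :=
        le_csSup (hbdd _) ⟨q, hq0, hqadm, rfl⟩
      have hc1 : ((T + N - t : ℕ) : ℝ) = (T : ℝ) + (N : ℝ) - (t : ℝ) := by
        push_cast [Nat.cast_sub (by omega : t ≤ T + N)]; ring
      have hc2 : ((T - t : ℕ) : ℝ) = (T : ℝ) - (t : ℝ) := by
        push_cast [Nat.cast_sub htT]; ring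
      rw [hc1] at hqval; rw [hc2] at hpval
      linarith
    · push_neg at hvisit
      have hsub : ∀ t, t ≤ T → μ (p t) ≤ μstar - Δ := fun t ht =>
        hgap _ (lt_of_le_of_ne (hmax _) (hvisit t ht))
      have hΔμ : Δ ≤ μstar := by
        have h0 := hsub 0 (Nat.zero_le _)
        have := hμ0 (p 0); linarith
      have hDT : (D : ℝ) ≤ (T : ℝ) := by
        nlinarith
      have hDTnat : D ≤ T := by exact_mod_cast hDT
      obtain ⟨sstar, hsstar⟩ := hex
      obtain ⟨d, p', hdD, hp'0, hp'd, hp'adm⟩ := hD s sstar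
      have hdT : d ≤ T := le_trans hdD hDTnat
      set r : ℕ → S := fun k => if k ≤ d then p' k else sstar with hr
      have hr0 : r 0 = s := by simp [hr, hp'0]
      have hradm : Adm adj r (T + N) := by
        intro k hk
        by_cases h1 : k + 1 ≤ d
        · simp only [hr]
          rw [if_pos (le_trans (Nat.le_succ k) h1), if_pos h1]
          exact hp'adm k (Nat.lt_of_succ_le h1)
        · by_cases h2 : k ≤ d
          · have hkd : k = d := by omega
            subst hkd
            simp only [hr, le_refl, if_pos, Nat.not_succ_le_self, if_neg, if_true, hp'd]
            exact hrefl _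
          · simp only [hr, if_neg h2, if_neg h1]; exact hrefl _
      obtain ⟨m, hm⟩ : ∃ m, T + N + 1 = d + m := ⟨T + N + 1 - d, by omega⟩
      have hrval : (m : ℝ) * μstar ≤ Vpath μ r (T + N) := by
        unfold Vpath
        rw [hm, Finset.sum_range_add]
        have h1 : (0 : ℝ) ≤ ∑ k ∈ Finset.range d, μ (r k) :=
          Finset.sum_nonneg (fun k _ => hμ0 _)
        have h2 : ∀ i ∈ Finset.range m, μ (r (d + i)) = μstar := by
          intro i _
          by_cases hi : d + i ≤ d
          · have : i = 0 := by omega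
            simp [hr, hi, this, hp'd, hsstar]
          · simp [hr, hi, hsstar]
        rw [Finset.sum_congr rfl h2, Finset.sum_const, card_range, nsmul_eq_mul]
        linarith
      have hpval : Vpath μ p T ≤ ((T : ℝ) + 1) * (μstar - Δ) := by
        unfold Vpath
        calc ∑ k ∈ Finset.range (T + 1), μ (p k)
            ≤ ∑ _k ∈ Finset.range (T + 1), (μstar - Δ) := by
              refine Finset.sum_le_sum (fun k hk => hsub k ?_)
              rw [Finset.mem_range] at hk; omega
        _ = ((T : ℝ) + 1) * (μstar - Δ) := by
              rw [Finset.sum_const, card_range, nsmul_eq_mul]; push_cast; ring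
      have hmem : Vpath μ r (T + N) ≤ Vopt adj μ s (T + N) :=
        le_csSup (hbdd _) ⟨r, hr0, hradm, rfl⟩
      have hc : (m : ℝ) = (T : ℝ) + (N : ℝ) + 1 - (d : ℝ) := by
        have := hm; have : ((T + N + 1 : ℕ) : ℝ) = ((d + m : ℕ) : ℝ) := by rw [hm]
        push_cast at this; linarith
      rw [hc] at hrval
      have hdDr : (d : ℝ) ≤ (D : ℝ) := by exact_mod_cast hdD
      nlinarith
  apply le_antisymm
  · rw [hVopt (T + N)]
    apply csSup_le (hne _)
    rintro v ⟨p, hp0, hadm, rfl⟩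
    have h1 : Vpath μ p T ≤ Vopt adj μ s T :=
      le_csSup (hbdd T) ⟨p, hp0, fun t ht => hadm t (by omega), rfl⟩
    have h2 : Vpath μ p (T + N) ≤ Vpath μ p T + (N : ℝ) * μstar := by
      have hsplit : Vpath μ p (T + N) =
          Vpath μ p T + ∑ i ∈ Finset.range N, μ (p (T + 1 + i)) := by
        unfold Vpath
        rw [show T + N + 1 = (T + 1) + N by omega, Finset.sum_range_add]
      rw [hsplit]
      have : ∑ i ∈ Finset.range N, μ (p (T + 1 + i)) ≤ (N : ℝ) * μstar := by
        calc _ ≤ ∑ _i ∈ Finset.range N, μstar := Finset.sum_le_sum (fun i _ => hmax _)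
        _ = (N : ℝ) * μstar := by rw [Finset.sum_const, card_range, nsmul_eq_mul]
      linarith
    linarith
  · have h : Vopt adj μ s T ≤ Vopt adj μ s (T + N) - (N : ℝ) * μstar := by
      rw [hVopt T]
      exact csSup_le (hne T) (fun v hv => by linarith [key v hv])
    linarith
end

section
/- (Optimal Termination) Let s_{0:T} be an admissible path achieving the optimal value V(s_0, T). Then there exists an index k ∈ [0, T] such that μ_{s_t} = μ_{s_k} for all t with k ≤ t ≤ T, and μ_{s_k} ≥ μ_{s_t} for all t ∈ [0, T]. -/
open Finset
open scoped ENNReal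

/-- Optimal Termination: an optimal path ends up spinning in a node whose mean
reward is the highest along the path. -/
theorem optimal_termination {S : Type*} [Fintype S] [Nonempty S]
    (adj : S → S → Prop) (hrefl : ∀ s, adj s s) (hsymm : ∀ s t, adj s t → adj t s)
    (μ : S → ℝ) (T : ℕ) (s0 : S) (p : ℕ → S)
    (hp0 : p 0 = s0) (hadm : Adm adj p T)
    (hopt : Vpath μ p T = Vopt adj μ s0 T) :
    ∃ k ≤ T, (∀ t, k ≤ t → t ≤ T → μ (p t) = μ (p k)) ∧
      (∀ t ≤ T, μ (p t) ≤ μ (p k)) := by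
  classical
  obtain ⟨m, hmmem, hmax⟩ := Finset.exists_max_image (Finset.range (T+1))
    (fun t => μ (p t)) ⟨0, by simp⟩
  have hmT : m ≤ T := Nat.lt_succ_iff.mp (Finset.mem_range.mp hmmem)
  refine ⟨m, hmT, ?_, fun t ht => hmax t (Finset.mem_range.mpr (Nat.lt_succ_of_le ht))⟩
  set q : ℕ → S := fun t => if t ≤ m then p t else p m with hq
  have hq0 : q 0 = s0 := by simp [hq, hp0]
  have hqadm : Adm adj q T := by
    intro t ht
    by_cases h1 : t + 1 ≤ m
    · have h2 : t ≤ m := Nat.le_of_succ_le h1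
      simp only [hq, if_pos h1, if_pos h2]
      exact hadm t ht
    · by_cases h2 : t ≤ m
      · have htm : t = m := le_antisymm h2 (by omega)
        subst htm
        simp only [hq, if_pos le_rfl, if_neg h1]
        exact hrefl _
      · simp only [hq, if_neg h1, if_neg h2]
        exact hrefl _
  have hle : ∀ t ∈ Finset.range (T+1), μ (p t) ≤ μ (q t) := by
    intro t htm
    by_cases h2 : t ≤ m
    · simp [hq, h2]
    · simp only [hq, if_neg h2]
      exact hmax t htm
  have hVle : Vpath μ p T ≤ Vpath μ q T := Finset.sum_le_sum hle
  -- boundedness of the value set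
  set C : ℝ := Finset.univ.sup' Finset.univ_nonempty μ with hC
  have hbdd : BddAbove {v | ∃ r : ℕ → S, r 0 = s0 ∧ Adm adj r T ∧ Vpath μ r T = v} := by
    refine ⟨(T+1 : ℕ) * C, ?_⟩
    rintro v ⟨r, -, -, rfl⟩
    have : Vpath μ r T ≤ ∑ t ∈ Finset.range (T+1), C :=
      Finset.sum_le_sum fun t _ => Finset.le_sup' μ (Finset.mem_univ (r t))
    simpa using this
  have hqle : Vpath μ q T ≤ Vopt adj μ s0 T :=
    le_csSup hbdd ⟨q, hq0, hqadm, rfl⟩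
  have heq : Vpath μ p T = Vpath μ q T := le_antisymm hVle (hopt ▸ hqle)
  have hzero : ∑ t ∈ Finset.range (T+1), (μ (q t) - μ (p t)) = 0 := by
    rw [Finset.sum_sub_distrib]
    simp [Vpath] at heq
    linarith [heq]
  have hterm : ∀ t ∈ Finset.range (T+1), μ (q t) - μ (p t) = 0 := by
    intro t htm
    exact (Finset.sum_eq_zero_iff_of_nonneg (fun t htm => sub_nonneg.mpr (hle t htm))).mp
      hzero t htm
  intro t hmt htT
  by_cases h2 : t ≤ m
  · rw [le_antisymm h2 hmt]
  · have := hterm t (Finset.mem_range.mpr (Nat.lt_succ_of_le htT))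
    simp only [hq, if_neg h2] at this
    linarith
end

section
/- (Strong Optimal Termination) Let s_{0:T} achieve V(s_0,T) and let K = min{k : μ_{s_t} = μ_{s_k} for all k ≤ t ≤ T} be its terminal step. Then μ_{s_t} < μ_{s_K} for all t < K. -/
open Finset
open scoped ENNReal

/-- Strong Optimal Termination: on an optimal path, all nodes strictly before
the terminal step `K` have mean reward strictly below `μ (p K)`. -/
theorem strong_optimal_termination {S : Type*} [Fintype S] [Nonempty S]
    (adj : S → S → Prop) (hrefl : ∀ s, adj s s) (hsymm : ∀ s t, adj s t → adj t s)
    (μ : S → ℝ) (T : ℕ) (s0 : S) (p : ℕ → S)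
    (hp0 : p 0 = s0) (hadm : Adm adj p T)
    (hopt : Vpath μ p T = Vopt adj μ s0 T)
    (K : ℕ) (hKT : K ≤ T)
    (hKterm : ∀ t, K ≤ t → t ≤ T → μ (p t) = μ (p K))
    (hKmin : ∀ k < K, ¬ (∀ t, k ≤ t → t ≤ T → μ (p t) = μ (p k))) :
    ∀ t < K, μ (p t) < μ (p K) := by
  classical
  by_contra hcon
  push_neg at hcon
  obtain ⟨t0, ht0K, ht0⟩ := hcon
  -- maximal index m < K with μ (p K) ≤ μ (p m)
  set F : Finset ℕ := (Finset.range K).filter (fun t => μ (p K) ≤ μ (p t)) with hF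
  have hFne : F.Nonempty := ⟨t0, by simp [hF, ht0K, ht0]⟩
  set m : ℕ := F.max' hFne with hm
  have hmF : m ∈ F := F.max'_mem hFne
  have hmK : m < K := by
    have := (Finset.mem_filter.mp hmF).1
    simpa using Finset.mem_range.mp this
  have hmμ : μ (p K) ≤ μ (p m) := (Finset.mem_filter.mp hmF).2
  have hmT : m < T := lt_of_lt_of_le hmK hKT
  have hmax : ∀ i, m < i → i < K → μ (p i) < μ (p K) := by
    intro i hmi hiK
    by_contra hle
    push_neg at hle
    have hiF : i ∈ F := Finset.mem_filter.mpr ⟨Finset.mem_range.mpr hiK, hle⟩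
    exact absurd (F.le_max' i hiF) (not_le.mpr hmi)
  -- the "stay at m" path
  set q : ℕ → S := fun t => if t ≤ m then p t else p m with hq
  have hq0 : q 0 = s0 := by simp [hq, hp0]
  have hqadm : Adm adj q T := by
    intro t ht
    by_cases h1 : t + 1 ≤ m
    · have h0 : t ≤ m := le_of_lt h1
      simp only [hq, if_pos h0, if_pos h1]
      exact hadm t ht
    · by_cases h2 : t ≤ m
      · have htm : t = m := le_antisymm h2 (by omega)
        subst htm
        simp only [hq, if_pos h2, if_neg h1]
        exact hrefl _
      · simp only [hq, if_neg h1, if_neg h2]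
        exact hrefl _
  -- bound above
  obtain ⟨b, hb⟩ := Finite.exists_max μ
  have hbdd : BddAbove {v | ∃ r : ℕ → S, r 0 = s0 ∧ Adm adj r T ∧ Vpath μ r T = v} := by
    refine ⟨(T + 1) * μ b, ?_⟩
    rintro v ⟨r, _, _, rfl⟩
    have : Vpath μ r T ≤ ∑ t ∈ Finset.range (T + 1), μ b := by
      unfold Vpath
      exact Finset.sum_le_sum fun i _ => hb _
    simpa using this
  have hqle : Vpath μ q T ≤ Vpath μ p T := by
    rw [hopt]
    exact le_csSup hbdd ⟨q, hq0, hqadm, rfl⟩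
  -- split sums
  have hsplit : ∀ r : ℕ → S, Vpath μ r T =
      ∑ t ∈ Finset.range (m + 1), μ (r t) + ∑ t ∈ Finset.Ico (m + 1) (T + 1), μ (r t) := by
    intro r
    unfold Vpath
    rw [Finset.range_eq_Ico, ← Finset.sum_Ico_consecutive _ (Nat.zero_le (m + 1)) (by omega),
      ← Finset.range_eq_Ico]
  have hqhead : ∑ t ∈ Finset.range (m + 1), μ (q t) = ∑ t ∈ Finset.range (m + 1), μ (p t) := by
    refine Finset.sum_congr rfl fun i hi => ?_
    have : i ≤ m := Nat.lt_succ_iff.mp (Finset.mem_range.mp hi)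
    simp [hq, this]
  have hqtail : ∑ t ∈ Finset.Ico (m + 1) (T + 1), μ (q t) = ((T - m : ℕ) : ℝ) * μ (p m) := by
    have h1 : ∀ i ∈ Finset.Ico (m + 1) (T + 1), μ (q i) = μ (p m) := by
      intro i hi
      have : ¬ i ≤ m := by have := (Finset.mem_Ico.mp hi).1; omega
      simp [hq, this]
    rw [Finset.sum_congr rfl h1, Finset.sum_const, Nat.card_Ico, nsmul_eq_mul]
    congr 2
    omega
  have hkey : (T - m : ℕ) * μ (p m) ≤ ∑ t ∈ Finset.Ico (m + 1) (T + 1), μ (p t) := by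
    have := hqle
    rw [hsplit q, hsplit p, hqhead, hqtail] at this
    linarith
  have htermle : ∀ i ∈ Finset.Ico (m + 1) (T + 1), μ (p i) ≤ μ (p K) := by
    intro i hi
    obtain ⟨h1, h2⟩ := Finset.mem_Ico.mp hi
    rcases lt_or_ge i K with h | h
    · exact le_of_lt (hmax i (by omega) h)
    · exact le_of_eq (hKterm i h (by omega))
  have hsumle : ∑ t ∈ Finset.Ico (m + 1) (T + 1), μ (p t) ≤ (T - m : ℕ) * μ (p K) := by
    calc ∑ t ∈ Finset.Ico (m + 1) (T + 1), μ (p t)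
        ≤ ∑ _t ∈ Finset.Ico (m + 1) (T + 1), μ (p K) := Finset.sum_le_sum htermle
      _ = (T - m : ℕ) * μ (p K) := by
          rw [Finset.sum_const, Nat.card_Ico, nsmul_eq_mul]
          congr 2
          omega
  have hTm : (0 : ℝ) < (T - m : ℕ) := by
    have : 0 < T - m := by omega
    exact_mod_cast this
  have hμmK : μ (p m) = μ (p K) := by
    nlinarith [hkey, hsumle]
  have hsumeq : ∑ t ∈ Finset.Ico (m + 1) (T + 1), μ (p t) =
      ∑ _t ∈ Finset.Ico (m + 1) (T + 1), μ (p K) := by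
    rw [Finset.sum_const, Nat.card_Ico, nsmul_eq_mul]
    have h1 : ((T + 1 - (m + 1) : ℕ) : ℝ) = ((T - m : ℕ) : ℝ) := by congr 1; omega
    rw [h1]
    nlinarith [hkey, hsumle, hμmK]
  have htermeq : ∀ i ∈ Finset.Ico (m + 1) (T + 1), μ (p i) = μ (p K) :=
    (Finset.sum_eq_sum_iff_of_le htermle).mp hsumeq
  refine hKmin m hmK fun t hmt htT => ?_
  rcases eq_or_lt_of_le hmt with h | h
  · rw [← h]
  · rw [htermeq t (Finset.mem_Ico.mpr ⟨by omega, by omega⟩), hμmK]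
end

section
/- If a stationary policy π minimizes the infinite-horizon undiscounted regret R_∞(π, s) = lim_{T→∞} ∑_{t=0}^T (μ* − μ_{s_t}) from start node s, then π achieves the optimal cumulative reward V(s, T) for every finite horizon T ≥ T_G + |S|, where T_G = ⌈Dμ*/Δ⌉. -/
open Finset
open scoped ENNReal

theorem key_lemma {S : Type*} (adj : S → S → Prop) (hrefl : ∀ s, adj s s)
    (μ : S → ℝ) (μstar : ℝ) (hmax : ∀ s, μ s ≤ μstar) :
    ∀ n : ℕ, ∀ p : ℕ → S, Adm adj p n → μ (p n) = μstar →
      ∃ π' : S → S, (∀ u, adj u (π' u)) ∧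
        Rinf μ μstar π' (p 0) ≤ ENNReal.ofReal (∑ t ∈ Finset.range n, (μstar - μ (p t))) := by
  intro n
  induction n using Nat.strong_induction_on with
  | _ n ih =>
    intro p hadm hopt
    by_cases hrep : ∃ i j, i < j ∧ j ≤ n ∧ p i = p j
    · obtain ⟨i, j, hij, hjn, heq⟩ := hrep
      have hd : 0 < j - i := Nat.sub_pos_of_lt hij
      set m := n - (j - i) with hm
      have hdn : j - i ≤ n := le_trans (Nat.sub_le _ _) hjn
      have hmn : m < n := Nat.sub_lt (lt_of_le_of_lt (Nat.zero_le i) (lt_of_lt_of_le hij hjn)) hd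
      have him : i ≤ m := by omega
      have hmadd : m + (j - i) = n := by omega
      set q : ℕ → S := fun k => if k < i then p k else p (k + (j - i)) with hq
      have hq_lt : ∀ k, k < i → q k = p k := by
        intro k hk; simp only [hq, if_pos hk]
      have hq_ge : ∀ k, i ≤ k → q k = p (k + (j - i)) := by
        intro k hk; simp only [hq, if_neg (not_lt.2 hk)]
      have hq_eqi : ∀ k, k ≤ i → q k = p k := by
        intro k hk
        rcases lt_or_eq_of_le hk with h | h
        · exact hq_lt k h
        · rw [h, hq_ge i le_rfl]
          have : i + (j - i) = j := by omega
          rw [this, ← heq]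
      have hq0 : q 0 = p 0 := hq_eqi 0 (Nat.zero_le _)
      have hqm : q m = p n := by rw [hq_ge m him, hmadd]
      have hadmq : Adm adj q m := by
        intro k hk
        rcases lt_or_ge k i with h | h
        · rw [hq_lt k h, hq_eqi (k + 1) h]
          exact hadm k (by omega)
        · rw [hq_ge k h, hq_ge (k + 1) (by omega)]
          have : k + 1 + (j - i) = k + (j - i) + 1 := by omega
          rw [this]
          exact hadm (k + (j - i)) (by omega)
      obtain ⟨π', h1, h2⟩ := ih m hmn q hadmq (by rw [hqm]; exact hopt)
      refine ⟨π', h1, ?_⟩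
      rw [hq0] at h2
      refine le_trans h2 (ENNReal.ofReal_le_ofReal ?_)
      set f : ℕ → ℕ := fun k => if k < i then k else k + (j - i) with hf
      have hfinj : Set.InjOn f (Finset.range m) := by
        intro a _ b _ hab
        simp only [hf] at hab
        split_ifs at hab with h1 h2 h2 <;> omega
      calc ∑ k ∈ Finset.range m, (μstar - μ (q k))
          = ∑ k ∈ Finset.range m, (μstar - μ (p (f k))) := by
            apply Finset.sum_congr rfl; intro k _
            simp only [hq, hf]
            split_ifs <;> rfl
        _ = ∑ t ∈ (Finset.range m).image f, (μstar - μ (p t)) := by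
            rw [Finset.sum_image (fun a ha b hb h => hfinj ha hb h)]
        _ ≤ ∑ t ∈ Finset.range n, (μstar - μ (p t)) := by
            apply Finset.sum_le_sum_of_subset_of_nonneg
            · intro t ht
              simp only [Finset.mem_image, Finset.mem_range] at ht ⊢
              obtain ⟨k, hk, rfl⟩ := ht
              simp only [hf]
              split_ifs <;> omega
            · intro t _ _; exact sub_nonneg.2 (hmax _)
    · push_neg at hrep
      have hinj : ∀ i j, i ≤ n → j ≤ n → p i = p j → i = j := by
        intro i j hi hj hpe
        rcases lt_trichotomy i j with h | h | h
        · exact absurd hpe (hrep i j h hj)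
        · exact h
        · exact absurd hpe.symm (hrep j i h hi)
      classical
      set π' : S → S := fun u => if h : ∃ i, i < n ∧ p i = u then p (h.choose + 1) else u with hπ'
      have hstep : ∀ t, t < n → π' (p t) = p (t + 1) := by
        intro t ht
        have h : ∃ i, i < n ∧ p i = p t := ⟨t, ht, rfl⟩
        simp only [hπ', dif_pos h]
        have := h.choose_spec
        have : h.choose = t := hinj _ _ (le_of_lt this.1) (le_of_lt ht) this.2
        rw [this]
      have hfix : π' (p n) = p n := by
        have h : ¬ ∃ i, i < n ∧ p i = p n := by
          rintro ⟨i, hi, hpe⟩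
          exact absurd (hinj i n (le_of_lt hi) le_rfl hpe) (Nat.ne_of_lt hi)
        simp only [hπ', dif_neg h]
      have hadj' : ∀ u, adj u (π' u) := by
        intro u
        by_cases h : ∃ i, i < n ∧ p i = u
        · simp only [hπ', dif_pos h]
          have hc := h.choose_spec
          have := hadm _ hc.1
          rwa [hc.2] at this
        · simp only [hπ', dif_neg h]; exact hrefl u
      have hiter : ∀ t, π'^[t] (p 0) = p (min t n) := by
        intro t
        induction t with
        | zero => simp
        | succ t iht =>
          rw [Function.iterate_succ_apply', iht]
          rcases lt_or_ge t n with h | h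
          · rw [min_eq_left (le_of_lt h), hstep t h, min_eq_left h]
          · rw [min_eq_right h, hfix, min_eq_right (by omega)]
      refine ⟨π', hadj', ?_⟩
      have hz : ∀ t ∉ Finset.range n, ENNReal.ofReal (μstar - μ (π'^[t] (p 0))) = 0 := by
        intro t ht
        rw [Finset.mem_range, not_lt] at ht
        rw [hiter t, min_eq_right ht, hopt, sub_self, ENNReal.ofReal_zero]
      rw [Rinf, tsum_eq_sum hz, ENNReal.ofReal_sum_of_nonneg
        (fun t _ => sub_nonneg.2 (hmax _))]
      apply le_of_eq
      apply Finset.sum_congr rfl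
      intro t ht
      rw [Finset.mem_range] at ht
      rw [hiter t, min_eq_left (le_of_lt ht)]

/-- If a stationary policy `π` minimizes the infinite-horizon undiscounted
regret `R_∞(·, s)`, then it achieves the optimal cumulative reward `V(s, T)`
for every finite horizon `T ≥ T_G + |S|`. -/
theorem Rinf_optimal_implies_finite_optimal {S : Type*} [Fintype S] [Nonempty S]
    (adj : S → S → Prop) (hrefl : ∀ s, adj s s) (hsymm : ∀ s t, adj s t → adj t s)
    (μ : S → ℝ) (hμ0 : ∀ s, 0 ≤ μ s)
    (μstar : ℝ) (hmax : ∀ s, μ s ≤ μstar) (hex : ∃ s, μ s = μstar)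
    (Δ : ℝ) (hΔ : 0 < Δ) (hgap : ∀ s, μ s < μstar → μ s ≤ μstar - Δ)
    (D : ℕ)
    (hD : ∀ s s' : S, ∃ (T : ℕ) (p : ℕ → S),
      T ≤ D ∧ p 0 = s ∧ p T = s' ∧ Adm adj p T)
    (π : S → S) (hπ : ∀ s, adj s (π s)) (s : S)
    (hopt : ∀ π' : S → S, (∀ u, adj u (π' u)) →
      Rinf μ μstar π s ≤ Rinf μ μstar π' s) :
    ∀ T, TG D μstar Δ + Fintype.card S ≤ T →
      Vpath μ (fun t => π^[t] s) T = Vopt adj μ s T := by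
  intro T hT
  simp only [TG] at hT
  classical
  have hμstar0 : 0 ≤ μstar := le_trans (hμ0 s) (hmax s)
  have hcard1 : 1 ≤ Fintype.card S := Fintype.card_pos
  -- baseline bound
  obtain ⟨sstar, hsstar⟩ := hex
  obtain ⟨T0, p0, hT0D, hp00, hp0T, hadm0⟩ := hD s sstar
  obtain ⟨π0, hadj0, hR0⟩ := key_lemma adj hrefl μ μstar hmax T0 p0 hadm0
    (by rw [hp0T]; exact hsstar)
  rw [hp00] at hR0
  have hbase : Rinf μ μstar π s ≤ ENNReal.ofReal ((D : ℝ) * μstar) := by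
    refine le_trans (hopt π0 hadj0) (le_trans hR0 (ENNReal.ofReal_le_ofReal ?_))
    calc ∑ t ∈ Finset.range T0, (μstar - μ (p0 t))
        ≤ ∑ _t ∈ Finset.range T0, μstar :=
          Finset.sum_le_sum fun t _ => by linarith [hμ0 (p0 t)]
      _ = (T0 : ℝ) * μstar := by rw [Finset.sum_const, Finset.card_range, nsmul_eq_mul]
      _ ≤ (D : ℝ) * μstar := mul_le_mul_of_nonneg_right (Nat.cast_le.2 hT0D) hμstar0
  have hfin : Rinf μ μstar π s ≠ ⊤ := by
    intro h
    rw [h, top_le_iff] at hbase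
    exact ENNReal.ofReal_ne_top hbase
  -- absorption: for t ≥ card S, the policy path is at an optimal node
  have habsorb : ∀ t, Fintype.card S ≤ t → μ (π^[t] s) = μstar := by
    obtain ⟨a, b, hab, heq⟩ := Fintype.exists_ne_map_eq_of_card_lt
      (fun k : Fin (Fintype.card S + 1) => π^[(k : ℕ)] s) (by simp)
    -- wlog a < b
    obtain ⟨i, j, hij, hjle, heqij⟩ :
        ∃ i j : ℕ, i < j ∧ j ≤ Fintype.card S ∧ π^[i] s = π^[j] s := by
      rcases lt_or_gt_of_ne hab with h | h
      · exact ⟨a, b, h, Nat.lt_succ_iff.1 b.isLt, heq⟩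
      · exact ⟨b, a, h, Nat.lt_succ_iff.1 a.isLt, heq.symm⟩
    have hper : ∀ t, i ≤ t → π^[t + (j - i)] s = π^[t] s := by
      intro t ht
      have h1 : t + (j - i) = (t - i) + j := by omega
      have h2 : t = (t - i) + i := by omega
      rw [h1, Function.iterate_add_apply, ← heqij, ← Function.iterate_add_apply, ← h2]
    intro t0 ht0
    by_contra hne
    have hlt : μ (π^[t0] s) < μstar := lt_of_le_of_ne (hmax _) hne
    set g : ℕ → ℕ := fun m => t0 + m * (j - i) with hg
    have hgiter : ∀ m, π^[g m] s = π^[t0] s := by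
      intro m
      induction m with
      | zero => simp [hg]
      | succ m ihm =>
        have h1 : g (m + 1) = g m + (j - i) := by simp [hg]; ring
        rw [h1, hper (g m) (by simp [hg]; omega), ihm]
    have hginj : Function.Injective g := by
      intro a b h
      simp only [hg] at h
      exact Nat.eq_of_mul_eq_mul_right (by omega) (Nat.add_left_cancel h)
    have htop : Rinf μ μstar π s = ⊤ := by
      refine top_le_iff.1 ?_
      calc (⊤ : ℝ≥0∞) = ∑' _ : ℕ, ENNReal.ofReal (μstar - μ (π^[t0] s)) :=
            (ENNReal.tsum_const_eq_top_of_ne_zero (by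
              simp only [ne_eq, ENNReal.ofReal_eq_zero, not_le]; linarith)).symm
        _ = ∑' m : ℕ, ENNReal.ofReal (μstar - μ (π^[g m] s)) := by
            apply tsum_congr; intro m; rw [hgiter m]
        _ ≤ Rinf μ μstar π s :=
            ENNReal.tsum_comp_le_tsum_of_injective hginj _
    exact hfin htop
  -- finite-sum representation of the regret
  set r0 : ℝ := ∑ t ∈ Finset.range (T + 1), (μstar - μ (π^[t] s)) with hr0
  have hr0nn : 0 ≤ r0 := Finset.sum_nonneg fun t _ => sub_nonneg.2 (hmax _)
  have hR : Rinf μ μstar π s = ENNReal.ofReal r0 := by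
    rw [Rinf, tsum_eq_sum (s := Finset.range (T + 1)) (fun t ht => by
      rw [Finset.mem_range, not_lt] at ht
      rw [habsorb t (by omega), sub_self, ENNReal.ofReal_zero]),
      ← ENNReal.ofReal_sum_of_nonneg (fun t _ => sub_nonneg.2 (hmax _))]
  have hr0le : r0 ≤ (D : ℝ) * μstar := by
    rw [hR] at hbase
    exact (ENNReal.ofReal_le_ofReal_iff (by positivity)).1 hbase
  -- value of the policy path
  have hVπ : Vpath μ (fun t => π^[t] s) T = (T + 1 : ℝ) * μstar - r0 := by
    simp only [Vpath, hr0, Finset.sum_sub_distrib, Finset.sum_const, Finset.card_range,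
      nsmul_eq_mul]
    push_cast
    ring
  -- the sup set
  have hmem : Vpath μ (fun t => π^[t] s) T ∈
      {v | ∃ p : ℕ → S, p 0 = s ∧ Adm adj p T ∧ Vpath μ p T = v} := by
    refine ⟨fun t => π^[t] s, by simp, ?_, rfl⟩
    intro t _
    simp only [Function.iterate_succ_apply']
    exact hπ _
  have hub : ∀ v ∈ {v | ∃ p : ℕ → S, p 0 = s ∧ Adm adj p T ∧ Vpath μ p T = v},
      v ≤ Vpath μ (fun t => π^[t] s) T := by
    rintro v ⟨p, hp0, hadmp, rfl⟩
    set rp : ℝ := ∑ t ∈ Finset.range (T + 1), (μstar - μ (p t)) with hrp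
    have hrpnn : 0 ≤ rp := Finset.sum_nonneg fun t _ => sub_nonneg.2 (hmax _)
    have hVp : Vpath μ p T = (T + 1 : ℝ) * μstar - rp := by
      simp only [Vpath, hrp, Finset.sum_sub_distrib, Finset.sum_const, Finset.card_range,
        nsmul_eq_mul]
      push_cast
      ring
    have hkey : r0 ≤ rp := by
      by_cases hvisit : ∃ t0, t0 ≤ T ∧ μ (p t0) = μstar
      · obtain ⟨t0, ht0T, ht0⟩ := hvisit
        obtain ⟨π', hadj', hR'⟩ := key_lemma adj hrefl μ μstar hmax t0 p
          (fun t ht => hadmp t (by omega)) ht0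
        rw [hp0] at hR'
        have h1 : Rinf μ μstar π s ≤
            ENNReal.ofReal (∑ t ∈ Finset.range t0, (μstar - μ (p t))) :=
          le_trans (hopt π' hadj') hR'
        have h2 : ∑ t ∈ Finset.range t0, (μstar - μ (p t)) ≤ rp := by
          apply Finset.sum_le_sum_of_subset_of_nonneg
          · exact Finset.range_subset_range.2 (by omega)
          · intro t _ _; exact sub_nonneg.2 (hmax _)
        rw [hR] at h1
        exact le_trans ((ENNReal.ofReal_le_ofReal_iff (Finset.sum_nonneg
          (fun t _ => sub_nonneg.2 (hmax _)))).1 h1) h2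
      · push_neg at hvisit
        have hterm : ∀ t ∈ Finset.range (T + 1), Δ ≤ μstar - μ (p t) := by
          intro t ht
          rw [Finset.mem_range] at ht
          have := hgap (p t) (lt_of_le_of_ne (hmax _) (hvisit t (by omega)))
          linarith
        have hrplb : (T + 1 : ℝ) * Δ ≤ rp := by
          calc (T + 1 : ℝ) * Δ = ∑ _t ∈ Finset.range (T + 1), Δ := by
                rw [Finset.sum_const, Finset.card_range, nsmul_eq_mul]; push_cast; ring
            _ ≤ rp := Finset.sum_le_sum hterm
        have hceil : (D : ℝ) * μstar ≤ (Nat.ceil ((D : ℝ) * μstar / Δ) : ℝ) * Δ := by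
          rw [← div_le_iff₀ hΔ] at *
          exact Nat.le_ceil _
        have hTG : (Nat.ceil ((D : ℝ) * μstar / Δ) : ℝ) ≤ (T : ℝ) := by
          have : Nat.ceil ((D : ℝ) * μstar / Δ) ≤ T := by omega
          exact_mod_cast this
        nlinarith
    rw [hVp, hVπ]
    linarith
  have hbdd : BddAbove {v | ∃ p : ℕ → S, p 0 = s ∧ Adm adj p T ∧ Vpath μ p T = v} :=
    ⟨Vpath μ (fun t => π^[t] s) T, hub⟩
  rw [Vopt]
  exact le_antisymm (le_csSup hbdd hmem) (csSup_le ⟨_, hmem⟩ hub)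
end
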